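/- Let (V, P) be a finite irreducible Markov chain with stationary distribution π, and let f : [0,1] → ℝ be nonnegative and satisfy 0 < f(a) ≤ f(1−a) for all a ∈ (0, 1/2]. Then for every natural number t, max_{x∈V} ‖P^t(x,·) − π‖_TV ≤ M₁ · M₂ · C_f^t, where M₁ = max{π(A)(1 − π(A))/f(π(A)) : A ⊆ V nonempty, π(A) ≤ 1/2} and M₂ = max_{x∈V} f(π(x))/π(x). -/

import Mathlib

open scoped Classical

noncomputable section

set_option linter.unusedSectionVars false
namespace Stmt8

variable {V : Type*} [Fintype V]

/-- measure of a finite set of states under `pi`. -/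
def meas (pi : V → ℝ) (A : Finset V) : ℝ := ∑ x ∈ A, pi x

/-- ergodic flow `Q(A,y) = ∑_{x∈A} π(x)P(x,y)` from a set to a point. -/
def flowPt (P : V → V → ℝ) (pi : V → ℝ) (A : Finset V) (y : V) : ℝ :=
  ∑ x ∈ A, pi x * P x y

/-- the evolving set `A_u = {y : Q(A,y) ≥ u·π(y)}`. -/
def evolve (P : V → V → ℝ) (pi : V → ℝ) (A : Finset V) (u : ℝ) : Finset V :=
  Finset.univ.filter fun y => u * pi y ≤ flowPt P pi A y

/-- `f`-congestion of a set: `C_f(A) = (∫₀¹ f(π(A_u)) du)/f(π(A))`. -/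
def fCong (f : ℝ → ℝ) (P : V → V → ℝ) (pi : V → ℝ) (A : Finset V) : ℝ :=
  (∫ u in (0:ℝ)..1, f (meas pi (evolve P pi A u))) / f (meas pi A)

/-- `C_f = max{C_f(A) : A nonempty, π(A) ≤ 1/2}`. -/
def fCongMax (f : ℝ → ℝ) (P : V → V → ℝ) (pi : V → ℝ) : ℝ :=
  sSup {c | ∃ A : Finset V, A.Nonempty ∧ meas pi A ≤ 1 / 2 ∧ c = fCong f P pi A}

/-- total variation distance between two distributions on `V`. -/
def tv (σ τ : V → ℝ) : ℝ := (1 / 2) * ∑ y, |σ y - τ y|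

/-! ### Auxiliary development -/

open MeasureTheory intervalIntegral

variable (P : V → V → ℝ) (pi : V → ℝ)

lemma mem_evolve {A : Finset V} {u : ℝ} {y : V} :
    y ∈ evolve P pi A u ↔ u * pi y ≤ flowPt P pi A y := by
  simp [evolve]

lemma measSet (A S : Finset V) : MeasurableSet {u : ℝ | evolve P pi A u = S} := by
  have h : {u : ℝ | evolve P pi A u = S} =
      ⋂ y : V, {u : ℝ | (u * pi y ≤ flowPt P pi A y) ↔ (y ∈ S)} := by
    ext u
    simp only [Set.mem_setOf_eq, Set.mem_iInter, Finset.ext_iff, mem_evolve]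
  rw [h]
  refine MeasurableSet.iInter fun y => ?_
  by_cases hy : y ∈ S
  · simp only [hy, iff_true]
    exact measurableSet_le (measurable_id.mul_const _) measurable_const
  · simp only [hy, iff_false, not_le]
    exact measurableSet_lt measurable_const (measurable_id.mul_const _)

lemma intable (φ : Finset V → ℝ) (A : Finset V) :
    IntervalIntegrable (fun u => φ (evolve P pi A u)) volume 0 1 := by
  have key : (fun u => φ (evolve P pi A u)) =
      fun u => ∑ S : Finset V, Set.indicator {u : ℝ | evolve P pi A u = S}
        (fun _ => φ S) u := by
    funext u
    rw [Finset.sum_congr rfl (fun S _ => Set.indicator_apply _ _ _)]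
    simp only [Set.mem_setOf_eq]
    rw [Finset.sum_ite_eq Finset.univ (evolve P pi A u) φ]
    simp
  rw [key]
  constructor <;>
  · refine MeasureTheory.integrable_finset_sum _ fun S _ => ?_
    refine (MeasureTheory.Integrable.indicator ?_ (measSet P pi A S))
    exact integrableOn_const measure_Ioc_lt_top.ne

/-- iterated expectation over the evolving-set process -/
def iter (P : V → V → ℝ) (pi : V → ℝ) (φ : Finset V → ℝ) : ℕ → Finset V → ℝ
  | 0 => φ
  | (t+1) => fun A => ∫ u in (0:ℝ)..1, iter P pi φ t (evolve P pi A u)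

lemma iter_mono {φ ψ : Finset V → ℝ} (h : ∀ B, φ B ≤ ψ B) :
    ∀ t A, iter P pi φ t A ≤ iter P pi ψ t A := by
  intro t
  induction t with
  | zero => exact h
  | succ t ih =>
    intro A
    exact integral_mono_on zero_le_one (intable P pi _ A) (intable P pi _ A)
      (fun u _ => ih _)

lemma iter_const_mul (c : ℝ) (φ : Finset V → ℝ) :
    ∀ t A, iter P pi (fun B => c * φ B) t A = c * iter P pi φ t A := by
  intro t
  induction t with
  | zero => intro A; rfl
  | succ t ih =>
    intro A
    show (∫ u in (0:ℝ)..1, iter P pi (fun B => c * φ B) t (evolve P pi A u)) = _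
    rw [show (fun u => iter P pi (fun B => c * φ B) t (evolve P pi A u))
        = fun u => c * iter P pi φ t (evolve P pi A u) from funext fun u => ih _]
    exact intervalIntegral.integral_const_mul c _

lemma iter_sub (φ ψ : Finset V → ℝ) :
    ∀ t A, iter P pi (fun B => φ B - ψ B) t A = iter P pi φ t A - iter P pi ψ t A := by
  intro t
  induction t with
  | zero => intro A; rfl
  | succ t ih =>
    intro A
    show (∫ u in (0:ℝ)..1, iter P pi (fun B => φ B - ψ B) t (evolve P pi A u)) = _
    rw [show (fun u => iter P pi (fun B => φ B - ψ B) t (evolve P pi A u))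
        = fun u => iter P pi φ t (evolve P pi A u) - iter P pi ψ t (evolve P pi A u)
        from funext fun u => ih _]
    exact intervalIntegral.integral_sub (intable P pi _ A) (intable P pi _ A)

lemma iter_abs_le (φ : Finset V → ℝ) :
    ∀ t A, |iter P pi φ t A| ≤ iter P pi (fun B => |φ B|) t A := by
  intro t
  induction t with
  | zero => intro A; exact le_refl _
  | succ t ih =>
    intro A
    refine le_trans (intervalIntegral.abs_integral_le_integral_abs zero_le_one) ?_
    exact integral_mono_on zero_le_one ((intable P pi (iter P pi φ t) A).abs)
      (intable P pi _ A) (fun u _ => ih _)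

lemma iter_sum {ι : Type*} (s : Finset ι) (g : ι → Finset V → ℝ) :
    ∀ t A, iter P pi (fun B => ∑ y ∈ s, g y B) t A = ∑ y ∈ s, iter P pi (g y) t A := by
  intro t
  induction t with
  | zero => intro A; rfl
  | succ t ih =>
    intro A
    show (∫ u in (0:ℝ)..1, iter P pi (fun B => ∑ y ∈ s, g y B) t (evolve P pi A u)) = _
    rw [show (fun u => iter P pi (fun B => ∑ y ∈ s, g y B) t (evolve P pi A u))
        = fun u => ∑ y ∈ s, iter P pi (g y) t (evolve P pi A u) from funext fun u => ih _]
    exact intervalIntegral.integral_finset_sum (fun y _ => intable P pi _ A)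

section Basics

variable (hP0 : ∀ x y, 0 ≤ P x y) (hP1 : ∀ x, ∑ y, P x y = 1)
  (hpi0 : ∀ x, 0 < pi x) (hpi1 : ∑ x, pi x = 1)
  (hstat : ∀ y, ∑ x, pi x * P x y = pi y)

include hpi0 in
lemma meas_nonneg (A : Finset V) : 0 ≤ meas pi A :=
  Finset.sum_nonneg fun x _ => (hpi0 x).le

include hpi0 hpi1 in
lemma meas_le_one (A : Finset V) : meas pi A ≤ 1 := by
  rw [← hpi1]
  exact Finset.sum_le_sum_of_subset_of_nonneg (Finset.subset_univ A)
    (fun x _ _ => (hpi0 x).le)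

include hpi1 in
lemma meas_univ : meas pi (Finset.univ : Finset V) = 1 := hpi1

include hpi1 in
lemma meas_compl (A : Finset V) : meas pi Aᶜ = 1 - meas pi A := by
  have := Finset.sum_add_sum_compl A pi
  rw [hpi1] at this
  unfold meas; linarith

include hpi0 in
lemma meas_pos {A : Finset V} (hA : A.Nonempty) : 0 < meas pi A :=
  Finset.sum_pos (fun x _ => hpi0 x) hA

include hpi0 hpi1 in
lemma meas_lt_one {A : Finset V} (hA : A ≠ Finset.univ) : meas pi A < 1 := by
  have h1 : Aᶜ.Nonempty := by
    rw [← Finset.card_pos, Finset.card_compl]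
    have : A.card < Fintype.card V := Finset.card_lt_card (Finset.ssubset_univ_iff.mpr hA)
    omega
  have h2 : 0 < meas pi Aᶜ := meas_pos pi hpi0 h1
  have h3 := meas_compl pi hpi1 A
  linarith

include hP0 hpi0 in
lemma flow_nonneg (A : Finset V) (y : V) : 0 ≤ flowPt P pi A y :=
  Finset.sum_nonneg fun x _ => mul_nonneg (hpi0 x).le (hP0 x y)

include hP0 hpi0 hstat in
lemma flow_le (A : Finset V) (y : V) : flowPt P pi A y ≤ pi y := by
  rw [← hstat y]
  exact Finset.sum_le_sum_of_subset_of_nonneg (Finset.subset_univ A)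
    (fun x _ _ => mul_nonneg (hpi0 x).le (hP0 x y))

include hstat in
lemma flow_compl (A : Finset V) (y : V) : flowPt P pi Aᶜ y = pi y - flowPt P pi A y := by
  have := Finset.sum_add_sum_compl A (fun x => pi x * P x y)
  rw [hstat y] at this
  unfold flowPt; linarith

include hP1 in
lemma flow_total (A : Finset V) : ∑ y, flowPt P pi A y = meas pi A := by
  unfold flowPt meas
  rw [Finset.sum_comm]
  refine Finset.sum_congr rfl fun x _ => ?_
  rw [← Finset.mul_sum, hP1 x, mul_one]

include hP0 hpi0 hstat in
lemma integral_ind (A : Finset V) (y : V) :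
    (∫ u in (0:ℝ)..1, (if y ∈ evolve P pi A u then (1:ℝ) else 0)) =
      flowPt P pi A y / pi y := by
  set c := flowPt P pi A y / pi y with hc
  have hpy := hpi0 y
  have hc0 : 0 ≤ c := div_nonneg (flow_nonneg P pi hP0 hpi0 A y) hpy.le
  have hc1 : c ≤ 1 := by
    rw [hc, div_le_one hpy]; exact flow_le P pi hP0 hpi0 hstat A y
  have hfun : (fun u : ℝ => if y ∈ evolve P pi A u then (1:ℝ) else 0)
      = fun u => if u ≤ c then 1 else 0 := by
    funext u
    have h1 : (y ∈ evolve P pi A u) ↔ (u ≤ c) := by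
      rw [mem_evolve, hc, le_div_iff₀ hpy]
    exact if_congr h1 rfl rfl
  rw [hfun]
  have hint : ∀ a b : ℝ, IntervalIntegrable (fun u => if u ≤ c then (1:ℝ) else 0)
      volume a b := by
    intro a b
    have h2 : (fun u : ℝ => if u ≤ c then (1:ℝ) else 0)
        = Set.indicator (Set.Iic c) (fun _ => 1) := by
      funext u; rw [Set.indicator_apply]; simp [Set.mem_Iic]
    rw [h2]
    constructor <;>
      exact (integrableOn_const measure_Ioc_lt_top.ne).indicator
        measurableSet_Iic
  rw [← intervalIntegral.integral_add_adjacent_intervals (hint 0 c) (hint c 1)]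
  have e1 : (∫ u in (0:ℝ)..c, (if u ≤ c then (1:ℝ) else 0)) = c := by
    rw [intervalIntegral.integral_congr (g := fun _ => (1:ℝ))
      (fun u hu => by
        rw [Set.uIcc_of_le hc0] at hu
        exact if_pos hu.2)]
    simp
  have e2 : (∫ u in c..(1:ℝ), (if u ≤ c then (1:ℝ) else 0)) = 0 := by
    rw [intervalIntegral.integral_congr_ae (g := fun _ => (0:ℝ))
      (Filter.Eventually.of_forall (fun u hu => by
        rw [Set.uIoc_of_le hc1] at hu
        exact if_neg (not_le.mpr hu.1)))]
    simp
  rw [e1, e2, add_zero]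

include hP0 hP1 hpi0 hstat in
lemma integral_meas (A : Finset V) :
    (∫ u in (0:ℝ)..1, meas pi (evolve P pi A u)) = meas pi A := by
  have key : ∀ B : Finset V, meas pi B = ∑ y : V, pi y * (if y ∈ B then (1:ℝ) else 0) := by
    intro B
    rw [Finset.sum_congr rfl (fun y _ => by rw [mul_ite, mul_one, mul_zero]),
      Finset.sum_ite_mem, Finset.univ_inter]
    rfl
  rw [show (fun u => meas pi (evolve P pi A u))
      = fun u => ∑ y : V, pi y * (if y ∈ evolve P pi A u then (1:ℝ) else 0)
      from funext fun u => key _]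
  rw [intervalIntegral.integral_finset_sum
    (fun y _ => intable P pi (fun B => pi y * (if y ∈ B then 1 else 0)) A)]
  have e : ∀ y : V, (∫ u in (0:ℝ)..1, pi y * (if y ∈ evolve P pi A u then (1:ℝ) else 0))
      = flowPt P pi A y := by
    intro y
    rw [intervalIntegral.integral_const_mul, integral_ind P pi hP0 hpi0 hstat A y,
      mul_div_cancel₀ _ (hpi0 y).ne']
  rw [Finset.sum_congr rfl (fun y _ => e y)]
  exact flow_total P pi hP1 A

include hP0 hP1 hpi0 hstat in
lemma iter_meas : ∀ t (A : Finset V), iter P pi (meas pi) t A = meas pi A := by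
  intro t
  induction t with
  | zero => intro A; rfl
  | succ t ih =>
    intro A
    show (∫ u in (0:ℝ)..1, iter P pi (meas pi) t (evolve P pi A u)) = _
    rw [show (fun u => iter P pi (meas pi) t (evolve P pi A u))
        = fun u => meas pi (evolve P pi A u) from funext fun u => ih _]
    exact integral_meas P pi hP0 hP1 hpi0 hstat A

include hP0 hpi0 hstat in
lemma key_ident (y : V) :
    ∀ t (A : Finset V),
      pi y * iter P pi (fun B => if y ∈ B then (1:ℝ) else 0) (t+1) A
        = ∑ z, pi z * P z y * iter P pi (fun B => if z ∈ B then (1:ℝ) else 0) t A := by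
  intro t
  induction t with
  | zero =>
    intro A
    show pi y * (∫ u in (0:ℝ)..1, (if y ∈ evolve P pi A u then (1:ℝ) else 0)) = _
    rw [integral_ind P pi hP0 hpi0 hstat A y, mul_div_cancel₀ _ (hpi0 y).ne']
    show flowPt P pi A y = ∑ z, pi z * P z y * (if z ∈ A then (1:ℝ) else 0)
    unfold flowPt
    rw [show (∑ z, pi z * P z y * (if z ∈ A then (1:ℝ) else 0))
        = ∑ z, (if z ∈ A then pi z * P z y else 0) from
      Finset.sum_congr rfl fun z _ => by rw [mul_ite, mul_one, mul_zero]]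
    rw [Finset.sum_ite_mem, Finset.univ_inter]
  | succ t ih =>
    intro A
    show pi y * (∫ u in (0:ℝ)..1,
        iter P pi (fun B => if y ∈ B then (1:ℝ) else 0) (t+1) (evolve P pi A u)) = _
    rw [← intervalIntegral.integral_const_mul]
    rw [show (fun u => pi y * iter P pi (fun B => if y ∈ B then (1:ℝ) else 0) (t+1)
          (evolve P pi A u))
        = fun u => ∑ z, pi z * P z y *
            iter P pi (fun B => if z ∈ B then (1:ℝ) else 0) t (evolve P pi A u)
        from funext fun u => ih (evolve P pi A u)]
    rw [intervalIntegral.integral_finset_sum (fun z _ =>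
      ((intable P pi (fun B => iter P pi (fun B' => if z ∈ B' then (1:ℝ) else 0) t B) A).const_mul
        (pi z * P z y)))]
    refine Finset.sum_congr rfl fun z _ => ?_
    rw [intervalIntegral.integral_const_mul]
    rfl

include hP0 hpi0 hstat in
lemma pt_ident : ∀ t (x y : V),
    (Matrix.of P ^ t) x y * pi x
      = pi y * iter P pi (fun B => if y ∈ B then (1:ℝ) else 0) t {x} := by
  intro t
  induction t with
  | zero =>
    intro x y
    show (1 : Matrix V V ℝ) x y * pi x
        = pi y * (if y ∈ ({x} : Finset V) then (1:ℝ) else 0)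
    rw [Matrix.one_apply]
    by_cases h : x = y
    · subst h; simp
    · rw [if_neg h, if_neg (by simp [Ne.symm h] : ¬ y ∈ ({x} : Finset V))]; simp
  | succ t ih =>
    intro x y
    rw [pow_succ, Matrix.mul_apply, Finset.sum_mul]
    simp only [Matrix.of_apply]
    rw [Finset.sum_congr rfl (fun z _ => by
      rw [show ((Matrix.of P ^ t) x z * P z y * pi x)
          = ((Matrix.of P ^ t) x z * pi x) * P z y from by ring, ih x z])]
    rw [show (∑ z, pi z * iter P pi (fun B => if z ∈ B then (1:ℝ) else 0) t {x} * P z y)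
        = ∑ z, pi z * P z y * iter P pi (fun B => if z ∈ B then (1:ℝ) else 0) t {x}
        from Finset.sum_congr rfl fun z _ => by ring]
    exact (key_ident P pi hP0 hpi0 hstat y t {x}).symm

variable (f : ℝ → ℝ)

/-- symmetrized `f` of the measure, vanishing on the absorbing sets. -/
def gsym (f : ℝ → ℝ) (pi : V → ℝ) (A : Finset V) : ℝ :=
  if A = ∅ ∨ A = Finset.univ then 0 else f (min (meas pi A) (1 - meas pi A))

variable (hf0 : ∀ a ∈ Set.Icc (0:ℝ) 1, 0 ≤ f a)
  (hf : ∀ a : ℝ, 0 < a → a ≤ 1 / 2 → 0 < f a ∧ f a ≤ f (1 - a))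

include hpi0 hpi1 hf0 hf in
lemma gsym_le_f (B : Finset V) : gsym f pi B ≤ f (meas pi B) := by
  unfold gsym
  by_cases h1 : B = ∅ ∨ B = Finset.univ
  · rw [if_pos h1]
    refine hf0 _ ⟨meas_nonneg pi hpi0 B, meas_le_one pi hpi0 hpi1 B⟩
  · rw [if_neg h1]
    push_neg at h1
    have hm0 : 0 < meas pi B := meas_pos pi hpi0 h1.1
    have hm1 : meas pi B < 1 := meas_lt_one pi hpi0 hpi1 h1.2
    rcases le_or_gt (meas pi B) (1/2) with h | h
    · rw [min_eq_left (by linarith)]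
    · rw [min_eq_right (by linarith)]
      have := (hf (1 - meas pi B) (by linarith) (by linarith)).2
      rwa [show (1 : ℝ) - (1 - meas pi B) = meas pi B by ring] at this

include hpi1 in
lemma gsym_compl (B : Finset V) : gsym f pi Bᶜ = gsym f pi B := by
  unfold gsym
  have h1 : (Bᶜ = ∅ ∨ Bᶜ = Finset.univ) ↔ (B = ∅ ∨ B = Finset.univ) := by
    rw [Finset.compl_eq_empty_iff, Finset.compl_eq_univ_iff]
    tauto
  by_cases h : B = ∅ ∨ B = Finset.univ
  · rw [if_pos (h1.mpr h), if_pos h]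
  · rw [if_neg (fun hc => h (h1.mp hc)), if_neg h, meas_compl pi hpi1 B,
      show (1 : ℝ) - (1 - meas pi B) = meas pi B by ring, min_comm]

lemma bddAbove_fCong :
    BddAbove {c | ∃ A : Finset V, A.Nonempty ∧ meas pi A ≤ 1 / 2 ∧ c = fCong f P pi A} :=
  Set.Finite.bddAbove (Set.Finite.subset (Set.finite_range (fCong f P pi))
    (by rintro c ⟨A, _, _, rfl⟩; exact ⟨A, rfl⟩))

include hpi0 hpi1 hf0 hf in
lemma fCongMax_nonneg (hsmall : ∃ A0 : Finset V, A0.Nonempty ∧ meas pi A0 ≤ 1/2) :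
    0 ≤ fCongMax f P pi := by
  obtain ⟨A0, hA0ne, hA0⟩ := hsmall
  have h1 : 0 ≤ fCong f P pi A0 := by
    unfold fCong
    refine div_nonneg ?_ (hf _ (meas_pos pi hpi0 hA0ne) hA0).1.le
    refine intervalIntegral.integral_nonneg zero_le_one fun u _ => ?_
    exact hf0 _ ⟨meas_nonneg pi hpi0 _, meas_le_one pi hpi0 hpi1 _⟩
  exact h1.trans (le_csSup (bddAbove_fCong P pi f) ⟨A0, hA0ne, hA0, rfl⟩)

include hP0 hpi0 hpi1 hstat hf0 hf in
lemma star_small {A : Finset V} (hAne : A.Nonempty) (hA : meas pi A ≤ 1/2) :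
    (∫ u in (0:ℝ)..1, gsym f pi (evolve P pi A u))
      ≤ fCongMax f P pi * gsym f pi A := by
  have hmA0 : 0 < meas pi A := meas_pos pi hpi0 hAne
  have hfA : 0 < f (meas pi A) := (hf _ hmA0 hA).1
  have step1 : (∫ u in (0:ℝ)..1, gsym f pi (evolve P pi A u))
      ≤ ∫ u in (0:ℝ)..1, f (meas pi (evolve P pi A u)) := by
    refine integral_mono_on zero_le_one (intable P pi _ A)
      (intable P pi (fun B => f (meas pi B)) A) fun u _ => ?_
    exact gsym_le_f pi hpi0 hpi1 f hf0 hf _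
  have step2 : (∫ u in (0:ℝ)..1, f (meas pi (evolve P pi A u)))
      = fCong f P pi A * f (meas pi A) := by
    unfold fCong
    rw [div_mul_cancel₀ _ hfA.ne']
  have step3 : fCong f P pi A ≤ fCongMax f P pi :=
    le_csSup (bddAbove_fCong P pi f) ⟨A, hAne, hA, rfl⟩
  have hgA : gsym f pi A = f (meas pi A) := by
    unfold gsym
    have hne : ¬ (A = ∅ ∨ A = Finset.univ) := by
      push_neg
      refine ⟨hAne, fun hc => ?_⟩
      rw [hc, meas_univ pi hpi1] at hA; linarith
    rw [if_neg hne, min_eq_left (by linarith)]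
  rw [hgA]
  calc (∫ u in (0:ℝ)..1, gsym f pi (evolve P pi A u))
      ≤ fCong f P pi A * f (meas pi A) := step1.trans_eq step2
    _ ≤ fCongMax f P pi * f (meas pi A) :=
        mul_le_mul_of_nonneg_right step3 hfA.le

include hP0 hP1 hpi0 hpi1 hstat hf0 hf in
lemma star (A : Finset V) :
    (∫ u in (0:ℝ)..1, gsym f pi (evolve P pi A u))
      ≤ fCongMax f P pi * gsym f pi A := by
  by_cases hA0 : A = ∅
  · subst hA0
    have hz : (∫ u in (0:ℝ)..1, gsym f pi (evolve P pi (∅ : Finset V) u)) = 0 := by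
      rw [intervalIntegral.integral_congr_ae (g := fun _ => (0:ℝ))
        (Filter.Eventually.of_forall fun u hu => ?_)]
      · simp
      · rw [Set.uIoc_of_le zero_le_one] at hu
        have he : evolve P pi (∅ : Finset V) u = ∅ := by
          rw [Finset.eq_empty_iff_forall_notMem]
          intro y hy
          rw [mem_evolve] at hy
          have : flowPt P pi (∅ : Finset V) y = 0 := by simp [flowPt]
          rw [this] at hy
          nlinarith [hpi0 y, hu.1]
        rw [he]
        simp [gsym]
    rw [hz]
    simp [gsym]
  by_cases hAu : A = Finset.univ
  · subst hAu
    have hz : (∫ u in (0:ℝ)..1, gsym f pi (evolve P pi (Finset.univ : Finset V) u)) = 0 := by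
      rw [intervalIntegral.integral_congr_ae (g := fun _ => (0:ℝ))
        (Filter.Eventually.of_forall fun u hu => ?_)]
      · simp
      · rw [Set.uIoc_of_le zero_le_one] at hu
        have he : evolve P pi (Finset.univ : Finset V) u = Finset.univ := by
          rw [Finset.eq_univ_iff_forall]
          intro y
          rw [mem_evolve]
          have h1 : flowPt P pi (Finset.univ : Finset V) y = pi y := hstat y
          rw [h1]
          nlinarith [hpi0 y, hu.1, hu.2]
        rw [he]
        simp [gsym]
    rw [hz]
    simp [gsym]
  rcases le_or_gt (meas pi A) (1/2) with h | h
  · exact star_small P pi hP0 hpi0 hpi1 hstat f hf0 hf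
      (Finset.nonempty_iff_ne_empty.mpr hA0) h
  · -- large set: pass to the complement
    set B := Aᶜ with hB
    have hBne : B.Nonempty := by
      rw [hB, ← Finset.card_pos, Finset.card_compl]
      have : A.card < Fintype.card V := Finset.card_lt_card (Finset.ssubset_univ_iff.mpr hAu)
      omega
    have hBm : meas pi B ≤ 1/2 := by
      rw [hB, meas_compl pi hpi1]; linarith
    -- a.e. in u, the evolving set of B at 1-u is the complement of that of A at u
    have hae : ∀ᵐ u : ℝ, gsym f pi (evolve P pi A u) = gsym f pi (evolve P pi B (1 - u)) := by
      have hfin : (Set.range fun y : V => flowPt P pi A y / pi y).Finite :=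
        Set.finite_range _
      have hz : volume (Set.range fun y : V => flowPt P pi A y / pi y) = 0 :=
        hfin.measure_zero _
      rw [MeasureTheory.ae_iff]
      refine MeasureTheory.measure_mono_null (fun u hu => ?_) hz
      by_contra hur
      apply hu
      have hcomp : evolve P pi B (1 - u) = (evolve P pi A u)ᶜ := by
        ext y
        rw [mem_evolve, Finset.mem_compl, mem_evolve, hB, flow_compl P pi hstat]
        have hne : flowPt P pi A y ≠ u * pi y := by
          intro hEq
          exact hur ⟨y, show flowPt P pi A y / pi y = u by
            rw [hEq, mul_div_assoc, div_self (hpi0 y).ne', mul_one]⟩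
        constructor
        · intro h3
          rw [not_le]
          exact lt_of_le_of_ne (by linarith) hne
        · intro h3
          rw [not_le] at h3
          linarith
      rw [hcomp, gsym_compl pi hpi1 f]
    calc (∫ u in (0:ℝ)..1, gsym f pi (evolve P pi A u))
        = ∫ u in (0:ℝ)..1, gsym f pi (evolve P pi B (1 - u)) :=
          intervalIntegral.integral_congr_ae (hae.mono fun u h _ => h)
      _ = ∫ u in (0:ℝ)..1, gsym f pi (evolve P pi B u) := by
          have h4 := intervalIntegral.integral_comp_sub_left (a := (0:ℝ)) (b := (1:ℝ))
            (fun u => gsym f pi (evolve P pi B u)) 1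
          norm_num at h4
          exact h4
      _ ≤ fCongMax f P pi * gsym f pi B :=
          star_small P pi hP0 hpi0 hpi1 hstat f hf0 hf hBne hBm
      _ = fCongMax f P pi * gsym f pi A := by rw [hB, gsym_compl pi hpi1 f]

include hP0 hP1 hpi0 hpi1 hstat hf0 hf in
lemma iter_gsym_le (hsmall : ∃ A0 : Finset V, A0.Nonempty ∧ meas pi A0 ≤ 1/2) :
    ∀ t (A : Finset V),
      iter P pi (gsym f pi) t A ≤ fCongMax f P pi ^ t * gsym f pi A := by
  have hC0 : 0 ≤ fCongMax f P pi := fCongMax_nonneg P pi hpi0 hpi1 f hf0 hf hsmall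
  intro t
  induction t with
  | zero => intro A; rw [pow_zero, one_mul]; exact le_refl _
  | succ t ih =>
    intro A
    show (∫ u in (0:ℝ)..1, iter P pi (gsym f pi) t (evolve P pi A u)) ≤ _
    calc (∫ u in (0:ℝ)..1, iter P pi (gsym f pi) t (evolve P pi A u))
        ≤ ∫ u in (0:ℝ)..1, fCongMax f P pi ^ t * gsym f pi (evolve P pi A u) :=
          integral_mono_on zero_le_one (intable P pi _ A)
            (intable P pi (fun B => fCongMax f P pi ^ t * gsym f pi B) A)
            (fun u _ => ih _)
      _ = fCongMax f P pi ^ t * ∫ u in (0:ℝ)..1, gsym f pi (evolve P pi A u) :=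
          intervalIntegral.integral_const_mul _ _
      _ ≤ fCongMax f P pi ^ t * (fCongMax f P pi * gsym f pi A) :=
          mul_le_mul_of_nonneg_left (star P pi hP0 hP1 hpi0 hpi1 hstat f hf0 hf A)
            (pow_nonneg hC0 t)
      _ = fCongMax f P pi ^ (t+1) * gsym f pi A := by ring

lemma bddAbove_M1 :
    BddAbove {c | ∃ A : Finset V, A.Nonempty ∧ meas pi A ≤ 1 / 2 ∧
      c = meas pi A * (1 - meas pi A) / f (meas pi A)} :=
  Set.Finite.bddAbove (Set.Finite.subset
    (Set.finite_range (fun A : Finset V => meas pi A * (1 - meas pi A) / f (meas pi A)))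
    (by rintro c ⟨A, _, _, rfl⟩; exact ⟨A, rfl⟩))

include hpi0 hpi1 hf in
lemma nu_le_M1_gsym (B : Finset V) :
    meas pi B * (1 - meas pi B)
      ≤ sSup {c | ∃ A : Finset V, A.Nonempty ∧ meas pi A ≤ 1 / 2 ∧
          c = meas pi A * (1 - meas pi A) / f (meas pi A)} * gsym f pi B := by
  set M1 := sSup {c | ∃ A : Finset V, A.Nonempty ∧ meas pi A ≤ 1 / 2 ∧
      c = meas pi A * (1 - meas pi A) / f (meas pi A)} with hM1
  by_cases hB0 : B = ∅
  · subst hB0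
    simp [gsym, meas]
  by_cases hBu : B = Finset.univ
  · subst hBu
    rw [meas_univ pi hpi1]
    simp [gsym]
  have hm0 : 0 < meas pi B := meas_pos pi hpi0 (Finset.nonempty_iff_ne_empty.mpr hB0)
  have hm1 : meas pi B < 1 := meas_lt_one pi hpi0 hpi1 hBu
  have hgB : ¬ (B = ∅ ∨ B = Finset.univ) := by tauto
  rcases le_or_gt (meas pi B) (1/2) with h | h
  · have hfm : 0 < f (meas pi B) := (hf _ hm0 h).1
    have hel : meas pi B * (1 - meas pi B) / f (meas pi B) ≤ M1 :=
      le_csSup (bddAbove_M1 pi f) ⟨B, Finset.nonempty_iff_ne_empty.mpr hB0, h, rfl⟩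
    have hgs : gsym f pi B = f (meas pi B) := by
      unfold gsym
      rw [if_neg hgB, min_eq_left (by linarith)]
    rw [hgs]
    calc meas pi B * (1 - meas pi B)
        = meas pi B * (1 - meas pi B) / f (meas pi B) * f (meas pi B) := by
          field_simp
      _ ≤ M1 * f (meas pi B) := mul_le_mul_of_nonneg_right hel hfm.le
  · have hBcne : Bᶜ.Nonempty := by
      rw [← Finset.card_pos, Finset.card_compl]
      have : B.card < Fintype.card V := Finset.card_lt_card (Finset.ssubset_univ_iff.mpr hBu)
      omega
    have hmc : meas pi Bᶜ = 1 - meas pi B := meas_compl pi hpi1 B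
    have hmc2 : meas pi Bᶜ ≤ 1/2 := by rw [hmc]; linarith
    have hfm : 0 < f (1 - meas pi B) := by
      have := (hf (1 - meas pi B) (by linarith) (by linarith)).1
      exact this
    have hel : meas pi Bᶜ * (1 - meas pi Bᶜ) / f (meas pi Bᶜ) ≤ M1 :=
      le_csSup (bddAbove_M1 pi f) ⟨Bᶜ, hBcne, hmc2, rfl⟩
    rw [hmc, show (1 : ℝ) - (1 - meas pi B) = meas pi B by ring] at hel
    have hgs : gsym f pi B = f (1 - meas pi B) := by
      unfold gsym
      rw [if_neg hgB, min_eq_right (by linarith)]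
    rw [hgs]
    calc meas pi B * (1 - meas pi B)
        = (1 - meas pi B) * meas pi B / f (1 - meas pi B) * f (1 - meas pi B) := by
          field_simp
      _ ≤ M1 * f (1 - meas pi B) := mul_le_mul_of_nonneg_right hel hfm.le

include hpi0 hpi1 in
lemma M1_nonneg (hsmall : ∃ A0 : Finset V, A0.Nonempty ∧ meas pi A0 ≤ 1/2)
    (hfpos : ∀ a : ℝ, 0 < a → a ≤ 1 / 2 → 0 < f a) :
    0 ≤ sSup {c | ∃ A : Finset V, A.Nonempty ∧ meas pi A ≤ 1 / 2 ∧
        c = meas pi A * (1 - meas pi A) / f (meas pi A)} := by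
  obtain ⟨A0, hA0ne, hA0⟩ := hsmall
  have hm0 : 0 < meas pi A0 := meas_pos pi hpi0 hA0ne
  have h1 : 0 ≤ meas pi A0 * (1 - meas pi A0) / f (meas pi A0) :=
    div_nonneg (mul_nonneg hm0.le (by linarith)) (hfpos _ hm0 hA0).le
  exact h1.trans (le_csSup (bddAbove_M1 pi f) ⟨A0, hA0ne, hA0, rfl⟩)

include hP0 hP1 hpi0 hpi1 hstat hf0 hf in
lemma tv_bound (hV2 : ∃ a b : V, a ≠ b) (t : ℕ) (x : V) :
    tv (fun y => (Matrix.of P ^ t) x y) pi ≤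
      sSup {c | ∃ A : Finset V, A.Nonempty ∧ meas pi A ≤ 1 / 2 ∧
          c = meas pi A * (1 - meas pi A) / f (meas pi A)} *
        (f (pi x) / pi x) * fCongMax f P pi ^ t := by
  -- a set of measure at most 1/2 exists
  obtain ⟨a, b, hab⟩ := hV2
  have hsum_ab : pi a + pi b ≤ 1 := by
    have h2 : (∑ y ∈ ({a, b} : Finset V), pi y) ≤ ∑ y, pi y :=
      Finset.sum_le_sum_of_subset_of_nonneg (Finset.subset_univ _)
        (fun z _ _ => (hpi0 z).le)
    rwa [Finset.sum_pair hab, hpi1] at h2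
  have hsmall : ∃ A0 : Finset V, A0.Nonempty ∧ meas pi A0 ≤ 1/2 := by
    rcases le_or_gt (pi a) (1/2) with h | h
    · exact ⟨{a}, Finset.singleton_nonempty a,
        by rwa [show meas pi {a} = pi a from Finset.sum_singleton _ _]⟩
    · refine ⟨{b}, Finset.singleton_nonempty b, ?_⟩
      rw [show meas pi {b} = pi b from Finset.sum_singleton _ _]
      linarith [hpi0 a, hpi0 b]
  set M1 := sSup {c | ∃ A : Finset V, A.Nonempty ∧ meas pi A ≤ 1 / 2 ∧
      c = meas pi A * (1 - meas pi A) / f (meas pi A)} with hM1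
  set C := fCongMax f P pi with hC
  have hpx := hpi0 x
  have hmeasx : meas pi ({x} : Finset V) = pi x := Finset.sum_singleton _ _
  -- the basic identity
  have hdiff : ∀ y : V, (Matrix.of P ^ t) x y - pi y
      = (pi y / pi x) *
        iter P pi (fun B => (if y ∈ B then (1:ℝ) else 0) - meas pi B) t {x} := by
    intro y
    rw [iter_sub, iter_meas P pi hP0 hP1 hpi0 hstat t {x}, hmeasx]
    have hpt := pt_ident P pi hP0 hpi0 hstat t x y
    field_simp
    nlinarith [hpt]
  have h2 : ∀ y : V, |(Matrix.of P ^ t) x y - pi y|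
      ≤ (pi y / pi x) *
        iter P pi (fun B => |(if y ∈ B then (1:ℝ) else 0) - meas pi B|) t {x} := by
    intro y
    rw [hdiff y, abs_mul, abs_of_nonneg (div_nonneg (hpi0 y).le hpx.le)]
    exact mul_le_mul_of_nonneg_left (iter_abs_le P pi _ t {x})
      (div_nonneg (hpi0 y).le hpx.le)
  have h3 : ∀ B : Finset V, (∑ y, pi y * |(if y ∈ B then (1:ℝ) else 0) - meas pi B|)
      = 2 * (meas pi B * (1 - meas pi B)) := by
    intro B
    have hm0 : 0 ≤ meas pi B := meas_nonneg pi hpi0 B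
    have hm1 : meas pi B ≤ 1 := meas_le_one pi hpi0 hpi1 B
    have e1 : ∀ y : V, pi y * |(if y ∈ B then (1:ℝ) else 0) - meas pi B|
        = (if y ∈ B then pi y * (1 - meas pi B) else 0)
          + (if y ∈ Bᶜ then pi y * meas pi B else 0) := by
      intro y
      by_cases hy : y ∈ B
      · rw [if_pos hy, if_pos hy, if_neg (by simp [hy] : ¬ y ∈ Bᶜ), add_zero,
          abs_of_nonneg (by linarith : (0:ℝ) ≤ 1 - meas pi B)]
      · rw [if_neg hy, if_neg hy, if_pos (Finset.mem_compl.mpr hy), zero_add,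
          zero_sub, abs_neg, abs_of_nonneg hm0]
    rw [Finset.sum_congr rfl fun y _ => e1 y, Finset.sum_add_distrib,
      Finset.sum_ite_mem, Finset.sum_ite_mem, Finset.univ_inter, Finset.univ_inter,
      ← Finset.sum_mul, ← Finset.sum_mul]
    have hcompl : (∑ y ∈ Bᶜ, pi y) = 1 - meas pi B := meas_compl pi hpi1 B
    rw [hcompl]
    show meas pi B * (1 - meas pi B) + (1 - meas pi B) * meas pi B = _
    ring
  have h4 : (∑ y, (pi y / pi x) *
        iter P pi (fun B => |(if y ∈ B then (1:ℝ) else 0) - meas pi B|) t {x})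
      = (1 / pi x) *
        (2 * iter P pi (fun B => meas pi B * (1 - meas pi B)) t {x}) := by
    have e2 : ∀ y : V, (pi y / pi x) *
        iter P pi (fun B => |(if y ∈ B then (1:ℝ) else 0) - meas pi B|) t {x}
        = (1 / pi x) *
          iter P pi (fun B => pi y * |(if y ∈ B then (1:ℝ) else 0) - meas pi B|) t {x} := by
      intro y
      rw [iter_const_mul]
      ring
    rw [Finset.sum_congr rfl fun y _ => e2 y, ← Finset.mul_sum,
      ← iter_sum P pi Finset.univ
        (fun y B => pi y * |(if y ∈ B then (1:ℝ) else 0) - meas pi B|) t {x}]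
    rw [show (fun B => ∑ y, pi y * |(if y ∈ B then (1:ℝ) else 0) - meas pi B|)
        = fun B => 2 * (meas pi B * (1 - meas pi B)) from funext fun B => h3 B]
    rw [iter_const_mul]
  -- putting the sum bound together
  have h5 : tv (fun y => (Matrix.of P ^ t) x y) pi
      ≤ (1 / pi x) * iter P pi (fun B => meas pi B * (1 - meas pi B)) t {x} := by
    show (1/2 : ℝ) * ∑ y, |(Matrix.of P ^ t) x y - pi y| ≤ _
    have hb : (∑ y, |(Matrix.of P ^ t) x y - pi y|)
        ≤ ∑ y, (pi y / pi x) *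
            iter P pi (fun B => |(if y ∈ B then (1:ℝ) else 0) - meas pi B|) t {x} :=
      Finset.sum_le_sum fun y _ => h2 y
    rw [h4] at hb
    linarith
  -- bound the nu-iteration
  have hM1n : 0 ≤ M1 :=
    M1_nonneg pi hpi0 hpi1 f hsmall (fun a' h1 h2' => (hf a' h1 h2').1)
  have hC0 : 0 ≤ C := fCongMax_nonneg P pi hpi0 hpi1 f hf0 hf hsmall
  have hCt : 0 ≤ C ^ t := pow_nonneg hC0 t
  have h6 : iter P pi (fun B => meas pi B * (1 - meas pi B)) t {x}
      ≤ M1 * (C ^ t * gsym f pi {x}) := by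
    calc iter P pi (fun B => meas pi B * (1 - meas pi B)) t {x}
        ≤ iter P pi (fun B => M1 * gsym f pi B) t {x} :=
          iter_mono P pi (fun B => nu_le_M1_gsym pi hpi0 hpi1 f hf B) t {x}
      _ = M1 * iter P pi (gsym f pi) t {x} := iter_const_mul P pi M1 _ t {x}
      _ ≤ M1 * (C ^ t * gsym f pi {x}) :=
          mul_le_mul_of_nonneg_left
            (iter_gsym_le P pi hP0 hP1 hpi0 hpi1 hstat f hf0 hf hsmall t {x}) hM1n
  have hgx : gsym f pi ({x} : Finset V) ≤ f (pi x) := by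
    have hgf := gsym_le_f pi hpi0 hpi1 f hf0 hf ({x} : Finset V)
    rwa [hmeasx] at hgf
  have hgx0 : 0 ≤ gsym f pi ({x} : Finset V) := by
    unfold gsym
    by_cases hc : ({x} : Finset V) = ∅ ∨ ({x} : Finset V) = Finset.univ
    · rw [if_pos hc]
    · rw [if_neg hc]
      push_neg at hc
      have hm0 : 0 < meas pi ({x} : Finset V) := meas_pos pi hpi0 (Finset.singleton_nonempty x)
      have hm1 : meas pi ({x} : Finset V) < 1 := meas_lt_one pi hpi0 hpi1 hc.2
      refine hf0 _ ⟨le_min (by linarith) (by linarith), ?_⟩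
      exact min_le_of_left_le (by linarith)
  calc tv (fun y => (Matrix.of P ^ t) x y) pi
      ≤ (1 / pi x) * iter P pi (fun B => meas pi B * (1 - meas pi B)) t {x} := h5
    _ ≤ (1 / pi x) * (M1 * (C ^ t * f (pi x))) := by
        refine mul_le_mul_of_nonneg_left (h6.trans ?_) (by positivity)
        exact mul_le_mul_of_nonneg_left (mul_le_mul_of_nonneg_left hgx hCt) hM1n
    _ = M1 * (f (pi x) / pi x) * C ^ t := by field_simp

end Basics

/-- Evolving set mixing bound: for a finite irreducible Markov chain and `f`
nonnegative on `[0,1]` with `0 < f(a) ≤ f(1−a)` on `(0,1/2]`,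
`max_x ‖P^t(x,·) − π‖_TV ≤ M₁ · M₂ · C_f^t`. -/
theorem stmt8 {V : Type*} [Fintype V] [Nonempty V] (P : V → V → ℝ) (pi : V → ℝ)
    (hP0 : ∀ x y, 0 ≤ P x y) (hP1 : ∀ x, ∑ y, P x y = 1)
    (hirr : ∀ x y : V, ∃ t : ℕ, 0 < (Matrix.of P ^ t) x y)
    (hpi0 : ∀ x, 0 < pi x) (hpi1 : ∑ x, pi x = 1)
    (hstat : ∀ y, ∑ x, pi x * P x y = pi y)
    (f : ℝ → ℝ) (hf0 : ∀ a ∈ Set.Icc (0:ℝ) 1, 0 ≤ f a)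
    (hf : ∀ a : ℝ, 0 < a → a ≤ 1 / 2 → 0 < f a ∧ f a ≤ f (1 - a))
    (t : ℕ) :
    (Finset.univ.sup' Finset.univ_nonempty fun x =>
        tv (fun y => (Matrix.of P ^ t) x y) pi) ≤
      sSup {c | ∃ A : Finset V, A.Nonempty ∧ meas pi A ≤ 1 / 2 ∧
            c = meas pi A * (1 - meas pi A) / f (meas pi A)} *
        (Finset.univ.sup' Finset.univ_nonempty fun x => f (pi x) / pi x) *
        fCongMax f P pi ^ t := by
  by_cases hV2 : ∃ a b : V, a ≠ b
  · -- nondegenerate case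
    obtain ⟨a, b, hab⟩ := hV2
    have hsum_ab : pi a + pi b ≤ 1 := by
      have h2 : (∑ y ∈ ({a, b} : Finset V), pi y) ≤ ∑ y, pi y :=
        Finset.sum_le_sum_of_subset_of_nonneg (Finset.subset_univ _)
          (fun z _ _ => (hpi0 z).le)
      rwa [Finset.sum_pair hab, hpi1] at h2
    have hsmall : ∃ A0 : Finset V, A0.Nonempty ∧ meas pi A0 ≤ 1/2 := by
      rcases le_or_gt (pi a) (1/2) with h | h
      · exact ⟨{a}, Finset.singleton_nonempty a,
          by rwa [show meas pi {a} = pi a from Finset.sum_singleton _ _]⟩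
      · refine ⟨{b}, Finset.singleton_nonempty b, ?_⟩
        rw [show meas pi {b} = pi b from Finset.sum_singleton _ _]
        linarith [hpi0 a, hpi0 b]
    have hM1n : 0 ≤ sSup {c | ∃ A : Finset V, A.Nonempty ∧ meas pi A ≤ 1 / 2 ∧
        c = meas pi A * (1 - meas pi A) / f (meas pi A)} :=
      M1_nonneg pi hpi0 hpi1 f hsmall (fun a' h1 h2' => (hf a' h1 h2').1)
    have hCt : 0 ≤ fCongMax f P pi ^ t :=
      pow_nonneg (fCongMax_nonneg P pi hpi0 hpi1 f hf0 hf hsmall) t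
    refine Finset.sup'_le _ _ fun x _ => ?_
    have hb := tv_bound P pi hP0 hP1 hpi0 hpi1 hstat f hf0 hf ⟨a, b, hab⟩ t x
    refine hb.trans ?_
    have hM2 : f (pi x) / pi x
        ≤ Finset.univ.sup' Finset.univ_nonempty (fun x => f (pi x) / pi x) :=
      Finset.le_sup' (fun x => f (pi x) / pi x) (Finset.mem_univ x)
    calc sSup {c | ∃ A : Finset V, A.Nonempty ∧ meas pi A ≤ 1 / 2 ∧
          c = meas pi A * (1 - meas pi A) / f (meas pi A)} *
            (f (pi x) / pi x) * fCongMax f P pi ^ t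
        = (sSup {c | ∃ A : Finset V, A.Nonempty ∧ meas pi A ≤ 1 / 2 ∧
            c = meas pi A * (1 - meas pi A) / f (meas pi A)} * fCongMax f P pi ^ t)
            * (f (pi x) / pi x) := by ring
      _ ≤ (sSup {c | ∃ A : Finset V, A.Nonempty ∧ meas pi A ≤ 1 / 2 ∧
            c = meas pi A * (1 - meas pi A) / f (meas pi A)} * fCongMax f P pi ^ t)
            * (Finset.univ.sup' Finset.univ_nonempty (fun x => f (pi x) / pi x)) :=
          mul_le_mul_of_nonneg_left hM2 (mul_nonneg hM1n hCt)
      _ = _ := by ring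
  · -- degenerate case : only one state
    push_neg at hV2
    have hempty : {c | ∃ A : Finset V, A.Nonempty ∧ meas pi A ≤ 1 / 2 ∧
        c = meas pi A * (1 - meas pi A) / f (meas pi A)} = (∅ : Set ℝ) := by
      ext c
      simp only [Set.mem_setOf_eq, Set.mem_empty_iff_false, iff_false, not_exists]
      rintro A ⟨⟨a, ha⟩, hle, _⟩
      have hAuniv : A = Finset.univ :=
        Finset.eq_univ_iff_forall.mpr fun y => by rwa [hV2 y a]
      rw [hAuniv, show meas pi Finset.univ = 1 from hpi1] at hle
      linarith
    rw [hempty, Real.sSup_empty, zero_mul, zero_mul]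
    refine Finset.sup'_le _ _ fun x _ => ?_
    have huniv : (Finset.univ : Finset V) = {x} := by
      ext y
      simp [hV2 y x]
    have hPt : ∀ s : ℕ, (Matrix.of P ^ s) x x = 1 := by
      intro s
      induction s with
      | zero => rw [pow_zero]; simp [Matrix.one_apply]
      | succ s ih =>
        rw [pow_succ, Matrix.mul_apply, huniv, Finset.sum_singleton, ih, one_mul]
        have h1 := hP1 x
        rw [huniv, Finset.sum_singleton] at h1
        exact h1
    have hpix : pi x = 1 := by
      have h1 := hpi1
      rwa [huniv, Finset.sum_singleton] at h1
    show (1/2 : ℝ) * ∑ y, |(Matrix.of P ^ t) x y - pi y| ≤ 0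
    rw [huniv, Finset.sum_singleton, hPt t, hpix]
    simp

end Stmt8
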